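/- Let k ≥ 3 and let A, B be k × k matrices over 𝔽₂ such that (1) the k × 2k augmented matrix [A | B] has rank k, and (2) for every invertible k × k matrix E over 𝔽₂, A·E·Bᵀ + B·(E⁻¹)ᵀ·Aᵀ = 0. Then A = 0 or B = 0. -/

import Mathlib

open Matrix

theorem stmt_0 (k : ℕ) (hk : 3 ≤ k)
    (A B : Matrix (Fin k) (Fin k) (ZMod 2))
    (hrank : (Matrix.fromCols A B).rank = k)
    (hcomm : ∀ E : Matrix (Fin k) (Fin k) (ZMod 2), IsUnit E →
      A * E * B.transpose + B * E⁻¹.transpose * A.transpose = 0) :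
    A = 0 ∨ B = 0 := by
  by_contra hcon
  push_neg at hcon
  obtain ⟨hA, hB⟩ := hcon
  set e : Fin k → Fin k → Matrix (Fin k) (Fin k) (ZMod 2) :=
    fun i j => Matrix.single i j 1 with he
  have addself : ∀ X : Matrix (Fin k) (Fin k) (ZMod 2), X + X = 0 := by
    intro X; ext x y
    simp [Matrix.add_apply, CharTwo.add_self_eq_zero]
  have hcomm' : ∀ E : Matrix (Fin k) (Fin k) (ZMod 2), IsUnit E →
      A * E * B.transpose = B * E⁻¹.transpose * A.transpose := by
    intro E hE
    have h := hcomm E hE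
    have := addself (B * E⁻¹.transpose * A.transpose)
    calc A * E * B.transpose
        = A * E * B.transpose + (B * E⁻¹.transpose * A.transpose + B * E⁻¹.transpose * A.transpose) := by
          rw [this, add_zero]
      _ = (A * E * B.transpose + B * E⁻¹.transpose * A.transpose) + B * E⁻¹.transpose * A.transpose := by
          abel
      _ = B * E⁻¹.transpose * A.transpose := by rw [h, zero_add]
  -- step 1: for i ≠ j, A * e i j * Bᵀ = B * (e i j)ᵀ * Aᵀ
  have step1 : ∀ i j : Fin k, i ≠ j →
      A * e i j * B.transpose = B * (e i j).transpose * A.transpose := by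
    intro i j hij
    set E := (1 : Matrix (Fin k) (Fin k) (ZMod 2)) + e i j with hE
    have hsq : E * E = 1 := by
      have h1 : e i j * e i j = 0 := by simp [he, Ne.symm hij]
      rw [hE, mul_add, add_mul, add_mul, h1]
      simp only [one_mul, mul_one, add_zero]
      rw [add_assoc, addself, add_zero]
    have hu : IsUnit E := by
      have hd : E.det * E.det = 1 := by rw [← Matrix.det_mul, hsq, Matrix.det_one]
      exact (Matrix.isUnit_iff_isUnit_det E).mpr (IsUnit.of_mul_eq_one _ hd)
    have hinv : E⁻¹ = E := Matrix.inv_eq_right_inv hsq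
    have h := hcomm' E hu
    rw [hinv, hE] at h
    rw [mul_add, mul_one, add_mul, Matrix.transpose_add, Matrix.transpose_one,
      mul_add, mul_one, add_mul] at h
    have h0 := hcomm' 1 isUnit_one
    rw [inv_one, Matrix.transpose_one, mul_one, mul_one] at h0
    -- h : A*Bᵀ + A*e*Bᵀ = B*Aᵀ + B*eᵀ*Aᵀ
    rw [h0] at h
    exact add_left_cancel h
  -- step 2: for i,j,l distinct, B * e l i * Aᵀ = 0
  have step2 : ∀ i j l : Fin k, i ≠ j → j ≠ l → i ≠ l →
      B * e l i * A.transpose = 0 := by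
    intro i j l hij hjl hil
    set N := e i j + e j l with hN
    set E := (1 : Matrix (Fin k) (Fin k) (ZMod 2)) + N with hE
    set F := (1 : Matrix (Fin k) (Fin k) (ZMod 2)) + N + e i l with hF
    have hNN : N * N = e i l := by
      simp [hN, he, mul_add, add_mul, Ne.symm hij, Ne.symm hil, Ne.symm hjl]
    have hNe : N * e i l = 0 := by
      simp [hN, he, add_mul, Ne.symm hij, Ne.symm hil]
    have hsq : E * F = 1 := by
      have h2 : ∀ X : Matrix (Fin k) (Fin k) (ZMod 2), (2:ℕ) • X = 0 := by
        intro X; rw [two_smul]; exact addself X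
      rw [hE, hF, add_mul, one_mul, mul_add, mul_add, mul_one, hNN, hNe, add_zero]
      abel_nf
      simp [two_mul, addself]
    have hu : IsUnit E := by
      have hd : E.det * F.det = 1 := by rw [← Matrix.det_mul, hsq, Matrix.det_one]
      exact (Matrix.isUnit_iff_isUnit_det E).mpr (IsUnit.of_mul_eq_one _ hd)
    have hinv : E⁻¹ = F := Matrix.inv_eq_right_inv hsq
    have h := hcomm' E hu
    rw [hinv, hE, hF] at h
    clear_value N E F
    have h0 := hcomm' 1 isUnit_one
    rw [inv_one, Matrix.transpose_one, mul_one, mul_one] at h0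
    have hstep : A * N * B.transpose = B * N.transpose * A.transpose := by
      rw [hN, Matrix.transpose_add, mul_add, add_mul, mul_add, add_mul,
        step1 i j hij, step1 j l hjl]
    have het : (e i l).transpose = e l i := by
      ext x y
      simp [he, Matrix.single, Matrix.transpose_apply, and_comm]
    have h' : A * B.transpose + A * N * B.transpose
        = (A * B.transpose + A * N * B.transpose) + B * (e i l).transpose * A.transpose := by
      calc A * B.transpose + A * N * B.transpose
          = A * (1 + N) * B.transpose := by rw [mul_add, mul_one, add_mul]
        _ = B * (1 + N + e i l).transpose * A.transpose := h
        _ = (B * A.transpose + B * N.transpose * A.transpose)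
              + B * (e i l).transpose * A.transpose := by
            rw [Matrix.transpose_add, Matrix.transpose_add, Matrix.transpose_one,
              mul_add, mul_add, mul_one, add_mul, add_mul]
        _ = (A * B.transpose + A * N * B.transpose) + B * (e i l).transpose * A.transpose := by
            rw [← h0, ← hstep]
    rw [het] at h'
    exact (left_eq_add.mp h')
  -- entrywise consequence
  have col : ∀ i l : Fin k, i ≠ l → (∀ y, A y i = 0) ∨ (∀ x, B x l = 0) := by
    intro i l hil
    have hj : ∃ j : Fin k, j ≠ i ∧ j ≠ l := by
      have hcard : ({i, l} : Finset (Fin k))ᶜ.Nonempty := by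
        rw [← Finset.card_pos, Finset.card_compl]
        have h1 : ({i, l} : Finset (Fin k)).card ≤ 2 :=
          (Finset.card_insert_le _ _).trans (by simp)
        have h2 : Fintype.card (Fin k) = k := Fintype.card_fin k
        omega
      obtain ⟨j, hjmem⟩ := hcard
      simp only [Finset.mem_compl, Finset.mem_insert, Finset.mem_singleton, not_or] at hjmem
      exact ⟨j, hjmem.1, hjmem.2⟩
    obtain ⟨j, hji, hjl⟩ := hj
    have key := step2 i j l (Ne.symm hji) hjl hil
    have hxy : ∀ x y, B x l * A y i = 0 := by
      intro x y
      have hk2 := congrFun (congrFun key x) y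
      simpa [he, Matrix.mul_apply, Matrix.single, Matrix.transpose_apply,
        Finset.sum_ite_eq, ite_and, mul_comm] using hk2
    by_cases hAc : ∀ y, A y i = 0
    · exact Or.inl hAc
    · push_neg at hAc
      obtain ⟨y, hy⟩ := hAc
      refine Or.inr fun x => ?_
      rcases mul_eq_zero.mp (hxy x y) with h | h
      · exact h
      · exact absurd h hy
  -- get nonzero entries
  have hAex : ∃ i y, A y i ≠ 0 := by
    by_contra hc; push_neg at hc
    exact hA (by ext y i; exact hc i y)
  have hBex : ∃ l x, B x l ≠ 0 := by
    by_contra hc; push_neg at hc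
    exact hB (by ext x l; exact hc l x)
  obtain ⟨i, y, hAyi⟩ := hAex
  obtain ⟨l, x, hBxl⟩ := hBex
  have hil : i = l := by
    by_contra hil
    rcases col i l hil with h | h
    · exact hAyi (h y)
    · exact hBxl (h x)
  subst hil
  -- all other columns vanish
  have hBz : ∀ j : Fin k, j ≠ i → ∀ x', B x' j = 0 := by
    intro j hji x'
    rcases col i j (Ne.symm hji) with h | h
    · exact absurd (h y) hAyi
    · exact h x'
  have hAz : ∀ j : Fin k, j ≠ i → ∀ y', A y' j = 0 := by
    intro j hji y'
    rcases col j i hji with h | h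
    · exact h y'
    · exact absurd (h x) hBxl
  -- rank bound
  set C : Matrix (Fin k) (Fin 2) (ZMod 2) := fun x' t => if t = 0 then A x' i else B x' i with hC
  set D : Matrix (Fin 2) (Fin k ⊕ Fin k) (ZMod 2) := fun t c =>
    Sum.elim (fun j => if t = 0 ∧ j = i then 1 else 0)
             (fun j => if t = 1 ∧ j = i then 1 else 0) c with hD
  have hfac : Matrix.fromCols A B = C * D := by
    ext x' c
    cases c with
    | inl j =>
      rw [Matrix.fromCols_apply_inl]
      by_cases hji : j = i
      · subst hji
        rw [Matrix.mul_apply]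
        simp [hC, hD, Matrix.mul_apply, Fin.sum_univ_two]
      · rw [hAz j hji x']
        rw [Matrix.mul_apply]
        simp [hC, hD, Matrix.mul_apply, Fin.sum_univ_two, hji]
    | inr j =>
      rw [Matrix.fromCols_apply_inr]
      by_cases hji : j = i
      · subst hji
        rw [Matrix.mul_apply]
        simp [hC, hD, Matrix.mul_apply, Fin.sum_univ_two]
      · rw [hBz j hji x']
        rw [Matrix.mul_apply]
        simp [hC, hD, Matrix.mul_apply, Fin.sum_univ_two, hji]
  have hle : (Matrix.fromCols A B).rank ≤ 2 := by
    rw [hfac]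
    exact (Matrix.rank_mul_le_left C D).trans
      ((Matrix.rank_le_card_width C).trans (by simp))
  rw [hrank] at hle
  omega
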